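/- Let Φ(t,y) be a cocycle of invertible linear maps over a flow y·t on a compact metric space Y, and suppose (X₁, X̃₁) and (X₂, X̃₂) are two exponentially separated pairs of complementary invariant subbundles of ℝⁿ × Y with dim X̃₁ = dim X̃₂ (fiberwise). Then X₁ = X₂ and X̃₁ = X̃₂. -/

import Mathlib

open Module Filter

private lemma small2 {K₁ ν₁ K₂ ν₂ ε₁ ε₂ : ℝ} (hν₁ : 0 < ν₁) (hν₂ : 0 < ν₂)
    (hε₁ : 0 < ε₁) (hε₂ : 0 < ε₂) :
    ∃ t : ℝ, 0 ≤ t ∧ K₁ * Real.exp (-ν₁ * t) < ε₁ ∧ K₂ * Real.exp (-ν₂ * t) < ε₂ := by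
  have key : ∀ K ν : ℝ, 0 < ν → Tendsto (fun t : ℝ => K * Real.exp (-ν * t)) atTop (nhds 0) := by
    intro K ν hν
    have h2 : Tendsto (fun t : ℝ => ν * t) atTop atTop :=
      Tendsto.const_mul_atTop hν tendsto_id
    have h3 : Tendsto (fun t : ℝ => -(ν * t)) atTop atBot := tendsto_neg_atTop_atBot.comp h2
    have h4 : Tendsto (fun t : ℝ => Real.exp (-(ν * t))) atTop (nhds 0) :=
      Real.tendsto_exp_atBot.comp h3
    have h5 := h4.const_mul K
    simpa [neg_mul] using h5
  have h1 := (key K₁ ν₁ hν₁).eventually (gt_mem_nhds hε₁)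
  have h2 := (key K₂ ν₂ hν₂).eventually (gt_mem_nhds hε₂)
  obtain ⟨t, ⟨ht1, ht2⟩, ht0⟩ := ((h1.and h2).and (eventually_ge_atTop (0:ℝ))).exists
  exact ⟨t, ht0, ht1, ht2⟩

private lemma scaled {n : ℕ} (T : (Fin n → ℝ) →L[ℝ] (Fin n → ℝ)) (hinj : Function.Injective T)
    {U U' : Submodule ℝ (Fin n → ℝ)} {c : ℝ}
    (h : ∀ x ∈ U, ∀ x' ∈ U', ‖x‖ = 1 → ‖x'‖ = 1 → ‖T x'‖ / ‖T x‖ ≤ c) :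
    ∀ x ∈ U, x ≠ 0 → ∀ x' ∈ U', ‖x‖ * ‖T x'‖ ≤ c * (‖x'‖ * ‖T x‖) := by
  intro x hx hx0 x' hx'
  rcases eq_or_ne x' 0 with rfl | hx'0
  · simp
  · have hnx : 0 < ‖x‖ := norm_pos_iff.mpr hx0
    have hnx' : 0 < ‖x'‖ := norm_pos_iff.mpr hx'0
    have hTx : T x ≠ 0 := fun h0 => hx0 (hinj (h0.trans (map_zero T).symm))
    have hTxpos : 0 < ‖T x‖ := norm_pos_iff.mpr hTx
    have h1 := h (‖x‖⁻¹ • x) (U.smul_mem _ hx) (‖x'‖⁻¹ • x') (U'.smul_mem _ hx') ?_ ?_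
    · rw [map_smul, map_smul, norm_smul, norm_smul, norm_inv, norm_inv,
        Real.norm_eq_abs, Real.norm_eq_abs, abs_of_pos hnx, abs_of_pos hnx'] at h1
      rw [div_le_iff₀ (by positivity)] at h1
      have h2 := mul_le_mul_of_nonneg_left h1 (le_of_lt (mul_pos hnx hnx'))
      have e1 : ‖x‖ * ‖x'‖ * (‖x'‖⁻¹ * ‖T x'‖) = ‖x‖ * ‖T x'‖ := by
        field_simp
      have e2 : ‖x‖ * ‖x'‖ * (c * (‖x‖⁻¹ * ‖T x‖)) = c * (‖x'‖ * ‖T x‖) := by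
        field_simp
      rw [e1, e2] at h2
      exact h2
    · rw [norm_smul, norm_inv, Real.norm_eq_abs, abs_of_pos hnx, inv_mul_cancel₀ hnx.ne']
    · rw [norm_smul, norm_inv, Real.norm_eq_abs, abs_of_pos hnx', inv_mul_cancel₀ hnx'.ne']
private lemma lemZ {n : ℕ} (A : ℝ → ((Fin n → ℝ) →L[ℝ] (Fin n → ℝ)))
    (hinj : ∀ t, Function.Injective (A t))
    (U₁ U₁' U₂ U₂' : Submodule ℝ (Fin n → ℝ))
    (hc₁ : IsCompl U₁ U₁') (hc₂ : IsCompl U₂ U₂')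
    {K₁ ν₁ K₂ ν₂ : ℝ} (hK₁ : 0 < K₁) (hν₁ : 0 < ν₁) (hK₂ : 0 < K₂) (hν₂ : 0 < ν₂)
    (hs₁ : ∀ t : ℝ, 0 ≤ t → ∀ x ∈ U₁, ∀ x' ∈ U₁', ‖x‖ = 1 → ‖x'‖ = 1 →
      ‖A t x'‖ / ‖A t x‖ ≤ K₁ * Real.exp (-ν₁ * t))
    (hs₂ : ∀ t : ℝ, 0 ≤ t → ∀ x ∈ U₂, ∀ x' ∈ U₂', ‖x‖ = 1 → ‖x'‖ = 1 →
      ‖A t x'‖ / ‖A t x‖ ≤ K₂ * Real.exp (-ν₂ * t))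
    (hdim : finrank ℝ U₁' = finrank ℝ U₂') :
    U₁ ⊓ U₂' = ⊥ := by
  rw [Submodule.eq_bot_iff]
  intro w hw
  by_contra hw0
  have hwU₁ : w ∈ U₁ := hw.1
  have hwU₂' : w ∈ U₂' := hw.2
  have hnw : 0 < ‖w‖ := norm_pos_iff.mpr hw0
  have s₁ : ∀ t : ℝ, 0 ≤ t → ∀ x ∈ U₁, x ≠ 0 → ∀ x' ∈ U₁',
      ‖x‖ * ‖A t x'‖ ≤ (K₁ * Real.exp (-ν₁ * t)) * (‖x'‖ * ‖A t x‖) :=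
    fun t ht => scaled (A t) (hinj t) (fun x hx x' hx' h1 h2 => hs₁ t ht x hx x' hx' h1 h2)
  have s₂ : ∀ t : ℝ, 0 ≤ t → ∀ x ∈ U₂, x ≠ 0 → ∀ x' ∈ U₂',
      ‖x‖ * ‖A t x'‖ ≤ (K₂ * Real.exp (-ν₂ * t)) * (‖x'‖ * ‖A t x‖) :=
    fun t ht => scaled (A t) (hinj t) (fun x hx x' hx' h1 h2 => hs₂ t ht x hx x' hx' h1 h2)
  -- (i) U₁' and U₂ are disjoint
  have hd : Disjoint U₁' U₂ := by
    rw [Submodule.disjoint_def]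
    intro z hz1 hz2
    by_contra hz0
    have hnz : 0 < ‖z‖ := norm_pos_iff.mpr hz0
    obtain ⟨t, ht0, ht1, ht2⟩ := small2 (K₁ := K₁) (K₂ := K₂) hν₁ hν₂ one_pos one_pos
    have e1 := s₁ t ht0 w hwU₁ hw0 z hz1
    have e2 := s₂ t ht0 z hz2 hz0 w hwU₂'
    have hAz : 0 < ‖A t z‖ := norm_pos_iff.mpr
      (fun h0 => hz0 ((hinj t) (h0.trans (map_zero (A t)).symm)))
    have hAw : 0 < ‖A t w‖ := norm_pos_iff.mpr
      (fun h0 => hw0 ((hinj t) (h0.trans (map_zero (A t)).symm)))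
    have hr₁ : 0 < K₁ * Real.exp (-ν₁ * t) := by positivity
    have hr₂ : 0 < K₂ * Real.exp (-ν₂ * t) := by positivity
    nlinarith [mul_pos hnw hAz, mul_pos hnz hAw]
  -- (ii) they span
  have hsup : U₁' ⊔ U₂ = ⊤ := by
    apply Submodule.eq_top_of_disjoint _ _ _ hd
    have h1 := Submodule.finrank_add_eq_of_isCompl hc₂
    rw [hdim]
    omega
  -- (iii) decompose w
  have hwT : w ∈ U₁' ⊔ U₂ := by rw [hsup]; trivial
  obtain ⟨p, hp, q, hq, hpq⟩ := Submodule.mem_sup.mp hwT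
  have hq0 : q ≠ 0 := by
    intro h0
    rw [h0, add_zero] at hpq
    exact hw0 (Submodule.disjoint_def.mp hc₁.disjoint w hwU₁ (hpq ▸ hp))
  have hnq : 0 < ‖q‖ := norm_pos_iff.mpr hq0
  -- (iv) contradiction
  set D : ℝ := ‖w‖ * ‖w‖ + ‖p‖ * ‖w‖ with hD
  have hDpos : 0 < D + 1 := by positivity
  set ε : ℝ := (‖q‖ * ‖w‖) / (D + 1) with hε
  have hεpos : 0 < ε := by positivity
  obtain ⟨t, ht0, ht1, ht2⟩ := small2 (K₁ := K₁) (K₂ := K₂) hν₁ hν₂ one_pos hεpos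
  set r₁ : ℝ := K₁ * Real.exp (-ν₁ * t) with hr₁def
  set r₂ : ℝ := K₂ * Real.exp (-ν₂ * t) with hr₂def
  have hr₁ : 0 < r₁ := by positivity
  have hr₂ : 0 < r₂ := by positivity
  have e1 := s₂ t ht0 q hq hq0 w hwU₂'
  -- ‖q‖ * ‖A t w‖ ≤ r₂ * (‖w‖ * ‖A t q‖)
  have e2 := s₁ t ht0 w hwU₁ hw0 p hp
  -- ‖w‖ * ‖A t p‖ ≤ r₁ * (‖p‖ * ‖A t w‖)
  rw [← hr₂def] at e1
  rw [← hr₁def] at e2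
  have hAq : 0 < ‖A t q‖ := norm_pos_iff.mpr
    (fun h0 => hq0 ((hinj t) (h0.trans (map_zero (A t)).symm)))
  have e3 : ‖A t q‖ ≤ ‖A t w‖ + ‖A t p‖ := by
    have : A t q = A t w - A t p := by rw [← hpq]; simp
    rw [this]
    exact norm_sub_le _ _
  -- combine: ‖q‖‖w‖‖A q‖ ≤ r₂‖w‖‖w‖‖A q‖ + r₁ r₂ ‖p‖‖w‖‖A q‖
  have key : ‖q‖ * ‖w‖ * ‖A t q‖ ≤ (r₂ * (‖w‖ * ‖w‖) + r₁ * r₂ * (‖p‖ * ‖w‖)) * ‖A t q‖ := by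
    nlinarith [mul_le_mul_of_nonneg_left e3 (mul_pos hnq hnw).le,
      mul_le_mul_of_nonneg_left e1 hnw.le,
      mul_le_mul_of_nonneg_left e2 hnq.le,
      mul_le_mul_of_nonneg_left e1 (mul_nonneg hr₁.le (norm_nonneg p))]
  have key2 : ‖q‖ * ‖w‖ ≤ r₂ * (‖w‖ * ‖w‖) + r₁ * r₂ * (‖p‖ * ‖w‖) :=
    le_of_mul_le_mul_right key hAq
  have hεD : ε * (D + 1) = ‖q‖ * ‖w‖ := div_mul_cancel₀ _ hDpos.ne'
  nlinarith [mul_pos hnq hnw, norm_nonneg p, norm_nonneg w,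
    mul_nonneg (norm_nonneg p) (norm_nonneg w), mul_nonneg (norm_nonneg w) (norm_nonneg w),
    mul_le_mul_of_nonneg_left ht1.le hr₂.le]

set_option maxHeartbeats 1000000 in
private lemma lemA {n : ℕ} (A : ℝ → ((Fin n → ℝ) →L[ℝ] (Fin n → ℝ)))
    (hinj : ∀ t, Function.Injective (A t))
    (U₁ U₁' U₂ U₂' : Submodule ℝ (Fin n → ℝ))
    (hc₁ : IsCompl U₁ U₁') (hc₂ : IsCompl U₂ U₂')
    {K₁ ν₁ K₂ ν₂ : ℝ} (hK₁ : 0 < K₁) (hν₁ : 0 < ν₁) (hK₂ : 0 < K₂) (hν₂ : 0 < ν₂)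
    (hs₁ : ∀ t : ℝ, 0 ≤ t → ∀ x ∈ U₁, ∀ x' ∈ U₁', ‖x‖ = 1 → ‖x'‖ = 1 →
      ‖A t x'‖ / ‖A t x‖ ≤ K₁ * Real.exp (-ν₁ * t))
    (hs₂ : ∀ t : ℝ, 0 ≤ t → ∀ x ∈ U₂, ∀ x' ∈ U₂', ‖x‖ = 1 → ‖x'‖ = 1 →
      ‖A t x'‖ / ‖A t x‖ ≤ K₂ * Real.exp (-ν₂ * t))
    (hdim : finrank ℝ U₁' = finrank ℝ U₂') :
    U₂' ≤ U₁' := by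
  have s₁ : ∀ t : ℝ, 0 ≤ t → ∀ x ∈ U₁, x ≠ 0 → ∀ x' ∈ U₁',
      ‖x‖ * ‖A t x'‖ ≤ (K₁ * Real.exp (-ν₁ * t)) * (‖x'‖ * ‖A t x‖) :=
    fun t ht => scaled (A t) (hinj t) (fun x hx x' hx' h1 h2 => hs₁ t ht x hx x' hx' h1 h2)
  have s₂ : ∀ t : ℝ, 0 ≤ t → ∀ x ∈ U₂, x ≠ 0 → ∀ x' ∈ U₂',
      ‖x‖ * ‖A t x'‖ ≤ (K₂ * Real.exp (-ν₂ * t)) * (‖x'‖ * ‖A t x‖) :=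
    fun t ht => scaled (A t) (hinj t) (fun x hx x' hx' h1 h2 => hs₂ t ht x hx x' hx' h1 h2)
  have h21 : U₂ ⊓ U₁' = ⊥ :=
    lemZ A hinj U₂ U₂' U₁ U₁' hc₂ hc₁ hK₂ hν₂ hK₁ hν₁ hs₂ hs₁ hdim.symm
  have hsup : U₂ ⊔ U₁' = ⊤ := by
    apply Submodule.eq_top_of_disjoint _ _ _ (disjoint_iff.mpr h21)
    have h2 := Submodule.finrank_add_eq_of_isCompl hc₂
    rw [← hdim] at h2
    omega
  intro v hv
  have hvT : v ∈ U₁ ⊔ U₁' := by rw [codisjoint_iff.mp hc₁.codisjoint]; trivial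
  obtain ⟨a, ha, a', ha', haa⟩ := Submodule.mem_sup.mp hvT
  suffices hA : a = 0 by rw [← haa, hA, zero_add]; exact ha'
  by_contra ha0
  have hna : 0 < ‖a‖ := norm_pos_iff.mpr ha0
  have haT : a ∈ U₂ ⊔ U₁' := by rw [hsup]; trivial
  obtain ⟨u, hu, e, he, hue⟩ := Submodule.mem_sup.mp haT
  have hu0 : u ≠ 0 := by
    intro h0
    rw [h0, zero_add] at hue
    exact ha0 (Submodule.disjoint_def.mp hc₁.disjoint a ha (hue ▸ he))
  have hnu : 0 < ‖u‖ := norm_pos_iff.mpr hu0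
  set D : ℝ := ‖u‖ * ‖a'‖ + ‖v‖ * ‖a‖ + ‖v‖ * ‖e‖ with hD
  have hDpos : 0 < D + 1 := by positivity
  set ε : ℝ := (‖u‖ * ‖a‖) / (D + 1) with hε
  have hεpos : 0 < ε := by positivity
  obtain ⟨t, ht0, ht1, ht2⟩ := small2 (K₁ := K₁) (K₂ := K₂) hν₁ hν₂
    (lt_min one_pos hεpos) hεpos
  set r₁ : ℝ := K₁ * Real.exp (-ν₁ * t) with hr₁def
  set r₂ : ℝ := K₂ * Real.exp (-ν₂ * t) with hr₂def
  have hr₁ : 0 < r₁ := by positivity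
  have hr₂ : 0 < r₂ := by positivity
  have hr₁1 : r₁ ≤ 1 := le_of_lt (lt_of_lt_of_le ht1 (min_le_left _ _))
  have hr₁ε : r₁ < ε := lt_of_lt_of_le ht1 (min_le_right _ _)
  have hr₁₂ε : r₁ * r₂ < ε := lt_of_le_of_lt (mul_le_of_le_one_left hr₂.le hr₁1) ht2
  have e1 := s₁ t ht0 a ha ha0 a' ha'
  have e2 := s₁ t ht0 a ha ha0 e he
  have e3 := s₂ t ht0 u hu hu0 v hv
  rw [← hr₁def] at e1 e2
  rw [← hr₂def] at e3
  have hα : 0 < ‖A t a‖ := norm_pos_iff.mpr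
    (fun h0 => ha0 ((hinj t) (h0.trans (map_zero (A t)).symm)))
  have n4 : ‖A t a‖ ≤ ‖A t v‖ + ‖A t a'‖ := by
    have : A t a = A t v - A t a' := by rw [← haa]; simp
    rw [this]; exact norm_sub_le _ _
  have n5 : ‖A t u‖ ≤ ‖A t a‖ + ‖A t e‖ := by
    have : A t u = A t a - A t e := by rw [← hue]; simp
    rw [this]; exact norm_sub_le _ _
  have key : ‖u‖ * ‖a‖ * ‖A t a‖ ≤
      (r₁ * (‖u‖ * ‖a'‖) + r₂ * (‖v‖ * ‖a‖) + r₁ * r₂ * (‖v‖ * ‖e‖)) * ‖A t a‖ := by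
    nlinarith [mul_le_mul_of_nonneg_left n4 (mul_pos hnu hna).le,
      mul_le_mul_of_nonneg_left e1 hnu.le,
      mul_le_mul_of_nonneg_left e3 hna.le,
      mul_le_mul_of_nonneg_left n5 (by positivity : (0:ℝ) ≤ r₂ * ‖v‖ * ‖a‖),
      mul_le_mul_of_nonneg_left e2 (by positivity : (0:ℝ) ≤ r₂ * ‖v‖)]
  have key2 : ‖u‖ * ‖a‖ ≤ r₁ * (‖u‖ * ‖a'‖) + r₂ * (‖v‖ * ‖a‖) + r₁ * r₂ * (‖v‖ * ‖e‖) :=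
    le_of_mul_le_mul_right key hα
  have hεD : ε * (D + 1) = ‖u‖ * ‖a‖ := div_mul_cancel₀ _ hDpos.ne'
  have c1 : (0:ℝ) ≤ ‖u‖ * ‖a'‖ := by positivity
  have c2 : (0:ℝ) ≤ ‖v‖ * ‖a‖ := by positivity
  have c3 : (0:ℝ) ≤ ‖v‖ * ‖e‖ := by positivity
  nlinarith [key2, hεD, hεpos,
    mul_le_mul_of_nonneg_right hr₁ε.le c1,
    mul_le_mul_of_nonneg_right ht2.le c2,
    mul_le_mul_of_nonneg_right hr₁₂ε.le c3]

private lemma lemB {n : ℕ} {Y : Type*}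
    (φ : ℝ → Y → Y)
    (Φ : ℝ → Y → ((Fin n → ℝ) →L[ℝ] (Fin n → ℝ)))
    (hΦ0 : ∀ y, Φ 0 y = ContinuousLinearMap.id ℝ (Fin n → ℝ))
    (hcoc : ∀ s t y, Φ (s + t) y = (Φ s (φ t y)).comp (Φ t y))
    (hbij : ∀ t y, Function.Bijective (Φ t y))
    (X X' : Y → Submodule ℝ (Fin n → ℝ))
    (hinv : ∀ t y, (X y).map (Φ t y).toLinearMap = X (φ t y))
    (hinv' : ∀ t y, (X' y).map (Φ t y).toLinearMap = X' (φ t y))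
    {K ν : ℝ} (hK : 0 < K) (hν : 0 < ν)
    (hsep : ∀ t : ℝ, 0 ≤ t → ∀ y : Y,
      ∀ x ∈ X y, ∀ x' ∈ X' y, ‖x‖ = 1 → ‖x'‖ = 1 →
        ‖Φ t y x'‖ / ‖Φ t y x‖ ≤ K * Real.exp (-ν * t)) :
    ∀ t : ℝ, 0 ≤ t → ∀ y : Y,
      ∀ x ∈ X' y, ∀ x' ∈ X y, ‖x‖ = 1 → ‖x'‖ = 1 →
        ‖Φ (-t) y x'‖ / ‖Φ (-t) y x‖ ≤ K * Real.exp (-ν * t) := by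
  intro t ht y x hx x' hx' hnx hnx'
  set z := φ (-t) y with hz
  have hcomp : ∀ w, Φ t z (Φ (-t) y w) = w := by
    intro w
    have h1 : Φ (t + -t) y = (Φ t z).comp (Φ (-t) y) := hcoc t (-t) y
    rw [add_neg_cancel, hΦ0] at h1
    have := DFunLike.congr_fun h1 w
    simpa using this.symm
  have hx0 : x ≠ 0 := by intro h; rw [h, norm_zero] at hnx; norm_num at hnx
  have hx'0 : x' ≠ 0 := by intro h; rw [h, norm_zero] at hnx'; norm_num at hnx'
  have hp : Φ (-t) y x' ∈ X z := by
    rw [← hinv (-t) y]; exact Submodule.mem_map_of_mem hx'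
  have hq : Φ (-t) y x ∈ X' z := by
    rw [← hinv' (-t) y]; exact Submodule.mem_map_of_mem hx
  have hinjB : Function.Injective (Φ (-t) y) := (hbij (-t) y).1
  have hp0 : Φ (-t) y x' ≠ 0 :=
    fun h0 => hx'0 (hinjB (h0.trans (map_zero (Φ (-t) y)).symm))
  have hq0 : Φ (-t) y x ≠ 0 :=
    fun h0 => hx0 (hinjB (h0.trans (map_zero (Φ (-t) y)).symm))
  have hqpos : 0 < ‖Φ (-t) y x‖ := norm_pos_iff.mpr hq0
  have key := scaled (Φ t z) (hbij t z).1
    (fun a haX a' ha'X h1 h2 => hsep t ht z a haX a' ha'X h1 h2)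
    (Φ (-t) y x') hp hp0 (Φ (-t) y x) hq
  rw [hcomp, hcomp, hnx, hnx'] at key
  rw [div_le_iff₀ hqpos]
  -- key : ‖Φ (-t) y x'‖ * 1 ≤ K * exp (-ν*t) * (1 * ‖Φ (-t) y x‖)
  nlinarith [key]

/-- Uniqueness of exponentially separated pairs of complementary invariant
subbundles of `ℝⁿ × Y` for a linear skew-product flow over a compact base,
when the "small" bundles have equal fiber dimensions. -/
theorem exp_separated_unique {n : ℕ} {Y : Type*} [MetricSpace Y] [CompactSpace Y]
    (φ : ℝ → Y → Y) (hφ0 : ∀ y, φ 0 y = y) (hφadd : ∀ s t y, φ (s + t) y = φ s (φ t y))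
    (Φ : ℝ → Y → ((Fin n → ℝ) →L[ℝ] (Fin n → ℝ)))
    (hΦ0 : ∀ y, Φ 0 y = ContinuousLinearMap.id ℝ (Fin n → ℝ))
    (hcoc : ∀ s t y, Φ (s + t) y = (Φ s (φ t y)).comp (Φ t y))
    (hbij : ∀ t y, Function.Bijective (Φ t y))
    (X₁ X₁' X₂ X₂' : Y → Submodule ℝ (Fin n → ℝ))
    (hcompl₁ : ∀ y, IsCompl (X₁ y) (X₁' y)) (hcompl₂ : ∀ y, IsCompl (X₂ y) (X₂' y))
    (hinv₁ : ∀ t y, (X₁ y).map (Φ t y).toLinearMap = X₁ (φ t y))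
    (hinv₁' : ∀ t y, (X₁' y).map (Φ t y).toLinearMap = X₁' (φ t y))
    (hinv₂ : ∀ t y, (X₂ y).map (Φ t y).toLinearMap = X₂ (φ t y))
    (hinv₂' : ∀ t y, (X₂' y).map (Φ t y).toLinearMap = X₂' (φ t y))
    (hsep₁ : ∃ K > (0:ℝ), ∃ ν > (0:ℝ), ∀ t : ℝ, 0 ≤ t → ∀ y : Y,
      ∀ x ∈ X₁ y, ∀ x' ∈ X₁' y, ‖x‖ = 1 → ‖x'‖ = 1 →
        ‖Φ t y x'‖ / ‖Φ t y x‖ ≤ K * Real.exp (-ν * t))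
    (hsep₂ : ∃ K > (0:ℝ), ∃ ν > (0:ℝ), ∀ t : ℝ, 0 ≤ t → ∀ y : Y,
      ∀ x ∈ X₂ y, ∀ x' ∈ X₂' y, ‖x‖ = 1 → ‖x'‖ = 1 →
        ‖Φ t y x'‖ / ‖Φ t y x‖ ≤ K * Real.exp (-ν * t))
    (hdim : ∀ y, Module.finrank ℝ (X₁' y) = Module.finrank ℝ (X₂' y)) :
    X₁ = X₂ ∧ X₁' = X₂' := by
  obtain ⟨K₁, hK₁, ν₁, hν₁, hs₁⟩ := hsep₁
  obtain ⟨K₂, hK₂, ν₂, hν₂, hs₂⟩ := hsep₂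
  -- backward separation
  have hb₁ := lemB φ Φ hΦ0 hcoc hbij X₁ X₁' hinv₁ hinv₁' hK₁ hν₁ hs₁
  have hb₂ := lemB φ Φ hΦ0 hcoc hbij X₂ X₂' hinv₂ hinv₂' hK₂ hν₂ hs₂
  -- equal dimensions of the big bundles
  have hdim2 : ∀ y, finrank ℝ (X₁ y) = finrank ℝ (X₂ y) := by
    intro y
    have h1 := Submodule.finrank_add_eq_of_isCompl (hcompl₁ y)
    have h2 := Submodule.finrank_add_eq_of_isCompl (hcompl₂ y)
    have h3 := hdim y
    omega
  have h2'le1' : ∀ y, X₂' y ≤ X₁' y := fun y =>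
    lemA (fun t => Φ t y) (fun t => (hbij t y).1) (X₁ y) (X₁' y) (X₂ y) (X₂' y)
      (hcompl₁ y) (hcompl₂ y) hK₁ hν₁ hK₂ hν₂
      (fun t ht x hx x' hx' h1 h2 => hs₁ t ht y x hx x' hx' h1 h2)
      (fun t ht x hx x' hx' h1 h2 => hs₂ t ht y x hx x' hx' h1 h2)
      (hdim y)
  have h1'le2' : ∀ y, X₁' y ≤ X₂' y := fun y =>
    lemA (fun t => Φ t y) (fun t => (hbij t y).1) (X₂ y) (X₂' y) (X₁ y) (X₁' y)
      (hcompl₂ y) (hcompl₁ y) hK₂ hν₂ hK₁ hν₁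
      (fun t ht x hx x' hx' h1 h2 => hs₂ t ht y x hx x' hx' h1 h2)
      (fun t ht x hx x' hx' h1 h2 => hs₁ t ht y x hx x' hx' h1 h2)
      (hdim y).symm
  have h2le1 : ∀ y, X₂ y ≤ X₁ y := fun y =>
    lemA (fun t => Φ (-t) y) (fun t => (hbij (-t) y).1) (X₁' y) (X₁ y) (X₂' y) (X₂ y)
      (hcompl₁ y).symm (hcompl₂ y).symm hK₁ hν₁ hK₂ hν₂
      (fun t ht x hx x' hx' h1 h2 => hb₁ t ht y x hx x' hx' h1 h2)
      (fun t ht x hx x' hx' h1 h2 => hb₂ t ht y x hx x' hx' h1 h2)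
      (hdim2 y)
  have h1le2 : ∀ y, X₁ y ≤ X₂ y := fun y =>
    lemA (fun t => Φ (-t) y) (fun t => (hbij (-t) y).1) (X₂' y) (X₂ y) (X₁' y) (X₁ y)
      (hcompl₂ y).symm (hcompl₁ y).symm hK₂ hν₂ hK₁ hν₁
      (fun t ht x hx x' hx' h1 h2 => hb₂ t ht y x hx x' hx' h1 h2)
      (fun t ht x hx x' hx' h1 h2 => hb₁ t ht y x hx x' hx' h1 h2)
      (hdim2 y).symm
  exact ⟨funext fun y => le_antisymm (h1le2 y) (h2le1 y),
         funext fun y => le_antisymm (h1'le2' y) (h2'le1' y)⟩
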